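/- Let x ∈ ℝ and γ ∈ (0,∞). Let (S_n) and (T_n) be sequences of positive reals with S_n → ∞ and T_n/S_n → γ, and let (L_n) be positive integers with (L_n − S_n)/√T_n → x. Then L_n! / (√(2π·S_n) · S_n^{L_n} · e^{−S_n} · e^{x²·T_n/(2·S_n)}) → 1 as n → ∞. -/

import Mathlib

open scoped Classical BigOperators Topology
open Filter Finset

noncomputable section

lemma aux_log_bound {d : ℝ} (hd : |d| ≤ 1/2) :
    |(1+d)*Real.log (1+d) - d - d^2/2| ≤ 4*|d|^3 := by
  have h1 : |(-d)| < 1 := by rw [abs_neg]; linarith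
  have hE := Real.abs_log_sub_add_sum_range_le h1 2
  have hsum : (∑ i ∈ range 2, (-d) ^ (i + 1) / (i + 1)) = -d + d^2/2 := by
    simp [Finset.sum_range_succ]
    ring
  rw [hsum, abs_neg] at hE
  have h1d : (1 : ℝ) - -d = 1 + d := by ring
  rw [h1d] at hE
  norm_num at hE
  set E : ℝ := (-d + d^2/2) + Real.log (1+d) with hEdef
  have hE2 : |E| ≤ 2*|d|^3 := by
    refine hE.trans ?_
    rw [div_le_iff₀ (by linarith : (0:ℝ) < 1 - |d|)]
    have h3 : (0:ℝ) ≤ |d|^3 := by positivity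
    nlinarith [abs_nonneg d]
  have hkey : (1+d)*Real.log (1+d) - d - d^2/2 = (1+d)*E - d^3/2 := by
    have : Real.log (1+d) = E + d - d^2/2 := by rw [hEdef]; ring
    rw [this]; ring
  rw [hkey]
  have habs : |(1+d)*E - d^3/2| ≤ |(1+d)| * |E| + |d|^3/2 := by
    calc |(1+d)*E - d^3/2| ≤ |(1+d)*E| + |d^3/2| := abs_sub _ _
    _ = |(1+d)| * |E| + |d|^3/2 := by rw [abs_mul, abs_div, abs_pow]; simp
  refine habs.trans ?_
  have h1d2 : |(1+d)| ≤ 3/2 := by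
    rw [abs_le] at hd ⊢; constructor <;> linarith [hd.1, hd.2]
  have h3 : (0:ℝ) ≤ |d|^3 := by positivity
  nlinarith [abs_nonneg E, hE2, abs_nonneg (1+d)]

set_option maxHeartbeats 2000000 in
/-- Stirling-type asymptotics for `L_n!` when `(L_n - S_n)/√T_n → x`,
`S_n → ∞` and `T_n/S_n → γ`. -/
theorem stmt15 (x γ : ℝ) (hγ : 0 < γ)
    (S T : ℕ → ℝ) (hS : ∀ n, 0 < S n) (hT : ∀ n, 0 < T n)
    (hStop : Tendsto S atTop atTop)
    (hTS : Tendsto (fun n => T n / S n) atTop (𝓝 γ))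
    (L : ℕ → ℕ) (hL : ∀ n, 0 < L n)
    (hx : Tendsto (fun n => ((L n : ℝ) - S n) / Real.sqrt (T n)) atTop (𝓝 x)) :
    Tendsto (fun n => (Nat.factorial (L n) : ℝ) /
        (Real.sqrt (2 * Real.pi * S n) * S n ^ L n * Real.exp (-S n) *
          Real.exp (x ^ 2 * T n / (2 * S n))))
      atTop (𝓝 1) := by
  have hπ : (0:ℝ) < Real.pi := Real.pi_pos
  have hsT : ∀ n, 0 < Real.sqrt (T n) := fun n => Real.sqrt_pos.2 (hT n)
  set xn : ℕ → ℝ := fun n => ((L n : ℝ) - S n) / Real.sqrt (T n) with hxndef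
  -- √T/S → 0
  have h00 : Tendsto (fun n => T n / (S n)^2) atTop (𝓝 0) := by
    have := hTS.mul hStop.inv_tendsto_atTop
    simp only [mul_zero] at this
    refine this.congr (fun n => ?_)
    field_simp
    simp only [Pi.inv_apply]; ring
  have h0 : Tendsto (fun n => Real.sqrt (T n) / S n) atTop (𝓝 0) := by
    have := h00.sqrt
    rw [Real.sqrt_zero] at this
    refine this.congr (fun n => ?_)
    rw [Real.sqrt_div (hT n).le, Real.sqrt_sq (hS n).le]
  -- δ → 0
  have hδ0 : Tendsto (fun n => ((L n : ℝ) - S n) / S n) atTop (𝓝 0) := by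
    have := hx.mul h0
    rw [mul_zero] at this
    refine this.congr (fun n => ?_)
    simp only [hxndef]
    field_simp [(hsT n).ne', (hS n).ne']
  -- L/S → 1
  have hr : Tendsto (fun n => (L n : ℝ) / S n) atTop (𝓝 1) := by
    have := hδ0.const_add 1
    rw [add_zero] at this
    refine this.congr (fun n => ?_)
    field_simp [(hS n).ne']
    ring
  -- L → atTop
  have hLtopR : Tendsto (fun n => (L n : ℝ)) atTop atTop := by
    have hev : ∀ᶠ n in atTop, S n / 2 ≤ (L n : ℝ) := by
      filter_upwards [hr.eventually (eventually_ge_nhds (by norm_num : (1:ℝ)/2 < 1))] with n hn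
      rw [le_div_iff₀ (hS n)] at hn
      linarith
    exact tendsto_atTop_mono' _ hev (hStop.atTop_div_const (by norm_num))
  have hLtop : Tendsto L atTop atTop := tendsto_natCast_atTop_iff.mp hLtopR
  -- T/(2S) → γ/2
  have hq : Tendsto (fun n => T n / (2 * S n)) atTop (𝓝 (γ/2)) := by
    have := hTS.div_const 2
    refine this.congr (fun n => ?_)
    rw [div_div, mul_comm]
  -- xn^2 formula
  have hxnsq : ∀ n, xn n ^ 2 = ((L n : ℝ) - S n)^2 / T n := by
    intro n
    simp only [hxndef]
    rw [div_pow, Real.sq_sqrt (hT n).le]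
  -- S |δ|^3 → 0
  have hSd3 : Tendsto (fun n => S n * |((L n : ℝ) - S n) / S n|^3) atTop (𝓝 0) := by
    have h1 : Tendsto (fun n => |((L n : ℝ) - S n) / S n| * (xn n ^ 2 * (T n / S n)))
        atTop (𝓝 0) := by
      have h2 : Tendsto (fun n => |((L n : ℝ) - S n) / S n|) atTop (𝓝 0) := by
        simpa using hδ0.abs
      have := h2.mul ((hx.pow 2).mul hTS)
      simpa using this
    refine h1.congr (fun n => ?_)
    rw [hxnsq n, abs_div, abs_of_pos (hS n)]
    field_simp [(hS n).ne', (hT n).ne']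
    rw [← sq_abs ((L n : ℝ) - S n)]; ring
  -- main Taylor term → 0
  have hphi : Tendsto (fun n => S n * ((1 + ((L n : ℝ) - S n) / S n) *
      Real.log (1 + ((L n : ℝ) - S n) / S n) - ((L n : ℝ) - S n) / S n -
      (((L n : ℝ) - S n) / S n)^2/2)) atTop (𝓝 0) := by
    refine squeeze_zero_norm' ?_ (by simpa using hSd3.const_mul (4:ℝ))
    have hev := NormedAddCommGroup.tendsto_nhds_zero.mp hδ0 (1/2) (by norm_num)
    filter_upwards [hev] with n hn
    rw [Real.norm_eq_abs] at hn
    rw [norm_mul, Real.norm_eq_abs, Real.norm_eq_abs, abs_of_pos (hS n)]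
    have hb := aux_log_bound hn.le
    have := mul_le_mul_of_nonneg_left hb (hS n).le
    refine le_trans this (le_of_eq (by ring))
  -- g → 0
  have hg : Tendsto (fun n => (L n : ℝ) * Real.log ((L n : ℝ)/S n) -
      ((L n : ℝ) - S n) - x^2 * T n/(2*S n)) atTop (𝓝 0) := by
    have hxx : Tendsto (fun n => (xn n ^ 2 - x^2) * (T n/(2*S n))) atTop (𝓝 0) := by
      have h1 := (hx.pow 2).sub_const (x^2)
      rw [sub_self] at h1
      have h2 := h1.mul hq
      rwa [zero_mul] at h2
    have := hphi.add hxx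
    rw [add_zero] at this
    refine this.congr (fun n => ?_)
    have h1 : 1 + ((L n : ℝ) - S n) / S n = (L n : ℝ)/S n := by
      field_simp [(hS n).ne']
      ring
    rw [h1, hxnsq n]
    field_simp [(hS n).ne', (hT n).ne']
    ring
  -- Stirling
  have hA : Tendsto (fun n => Stirling.stirlingSeq (L n) / Real.sqrt Real.pi) atTop (𝓝 1) := by
    have h1 : Tendsto (fun n => Stirling.stirlingSeq (L n)) atTop (𝓝 (Real.sqrt Real.pi)) :=
      Stirling.tendsto_stirlingSeq_sqrt_pi.comp hLtop
    have h2 := h1.div_const (Real.sqrt Real.pi)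
    rwa [div_self (Real.sqrt_ne_zero'.2 hπ)] at h2
  have hB : Tendsto (fun n => Real.sqrt ((L n : ℝ)/S n)) atTop (𝓝 1) := by
    have := hr.sqrt
    rwa [Real.sqrt_one] at this
  have hC : Tendsto (fun n => Real.exp ((L n : ℝ) * Real.log ((L n : ℝ)/S n) -
      ((L n : ℝ) - S n) - x^2 * T n/(2*S n))) atTop (𝓝 1) := by
    have := (Real.continuous_exp.tendsto 0).comp hg
    simpa [Function.comp_def] using this
  have hABC := (hA.mul hB).mul hC
  rw [mul_one, mul_one] at hABC
  refine hABC.congr (fun n => ?_)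
  -- pointwise identity
  have hLpos : (0:ℝ) < (L n : ℝ) := by exact_mod_cast hL n
  have hLS : (0:ℝ) < (L n : ℝ)/S n := div_pos hLpos (hS n)
  have hexpL : Real.exp ((L n : ℝ)) = Real.exp 1 ^ (L n) := by
    rw [← Real.exp_nat_mul, mul_one]
  have hexpg : Real.exp ((L n : ℝ) * Real.log ((L n : ℝ)/S n) - ((L n : ℝ) - S n)
      - x^2 * T n/(2*S n)) =
      ((L n : ℝ)/S n)^(L n) * Real.exp (S n) /
        (Real.exp 1 ^ (L n) * Real.exp (x^2 * T n/(2*S n))) := by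
    rw [Real.exp_sub, Real.exp_sub, Real.exp_sub, Real.exp_nat_mul, Real.exp_log hLS, hexpL]
    field_simp
  have hsπ : (0:ℝ) < Real.sqrt Real.pi := Real.sqrt_pos.2 hπ
  have hsL : (0:ℝ) < Real.sqrt (L n : ℝ) := Real.sqrt_pos.2 hLpos
  have hsS : (0:ℝ) < Real.sqrt (S n) := Real.sqrt_pos.2 (hS n)
  have hs2 : (0:ℝ) < Real.sqrt 2 := by positivity
  rw [hexpg, Stirling.stirlingSeq]
  rw [show 2 * Real.pi * S n = 2 * (Real.pi * S n) by ring,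
    Real.sqrt_mul (by norm_num : (0:ℝ) ≤ 2) ((L n : ℝ)),
    Real.sqrt_mul (by norm_num : (0:ℝ) ≤ 2) (Real.pi * S n),
    Real.sqrt_mul Real.pi_pos.le (S n),
    Real.sqrt_div hLpos.le, Real.exp_neg, div_pow, div_pow]
  field_simp [hsπ.ne', hsL.ne', hsS.ne', hs2.ne', (Real.exp_pos (S n)).ne',
    (Real.exp_pos (x^2 * T n/(2*S n))).ne',
    pow_ne_zero (L n) (hS n).ne', pow_ne_zero (L n) hLpos.ne',
    pow_ne_zero (L n) (Real.exp_pos 1).ne']
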